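/- Let t ≥ 3 and let F_{P,t} be the 3-graph on A ∪ [t], A = {a₁,…,a_{t−1}}, with edges {aᵢ, i, j} for 1 ≤ i < j ≤ t. Let H_A be the 3-graph on U ∪ V with |U| = s, |V| = n−s, whose edges are all triples with exactly one vertex in U and two in V. If s ≤ t−2, then H_A is F_{P,t}-free and has matching number at most s and exactly s·C(n−s,2) edges. -/

import Mathlib

open Finset

/-- Degree of a vertex in a 3-graph. -/
def degH {n : ℕ} (H : Finset (Finset (Fin n))) (v : Fin n) : ℕ :=
  (H.filter (fun e => v ∈ e)).card

/-- `H` is a 3-uniform hypergraph. -/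
def Uniform3 {n : ℕ} (H : Finset (Finset (Fin n))) : Prop :=
  ∀ e ∈ H, e.card = 3

/-- The matching number of `H` is at most `s`. -/
def MatchingAtMost {n : ℕ} (H : Finset (Finset (Fin n))) (s : ℕ) : Prop :=
  ∀ M ⊆ H, (M : Set (Finset (Fin n))).Pairwise (fun e f => Disjoint e f) → M.card ≤ s

/-- `H` contains a copy of the hypergraph with edge set `F`. -/
def HasCopy {α : Type*} [DecidableEq α] {n : ℕ}
    (F : Set (Finset α)) (H : Finset (Finset (Fin n))) : Prop :=
  ∃ f : α → Fin n, Function.Injective f ∧ ∀ e ∈ F, e.image f ∈ H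

/-- Number of edges of the Turán graph `T(n, r)`. -/
def turanEdges (n r : ℕ) : ℕ := (SimpleGraph.turanGraph n r).edgeFinset.card

/-- Edge set of the 3-graph `F_{P,t}` on `A ∪ [t]`, `A = Fin (t-1)`:
edges are `{aᵢ, i, j}` for `1 ≤ i < j ≤ t`. -/
def FPtEdges (t : ℕ) : Set (Finset (Fin (t - 1) ⊕ Fin t)) :=
  { e | ∃ (i : Fin (t - 1)) (j : Fin t), (i : ℕ) < (j : ℕ) ∧
      e = {Sum.inl i, Sum.inr (Fin.castLE (Nat.sub_le t 1) i), Sum.inr j} }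

/-- The 3-graph `H(n,s)`: all triples with exactly one vertex in the set
`A` of the first `s` vertices (and two in `B`). -/
def Hns (n s : ℕ) : Finset (Finset (Fin n)) :=
  Finset.univ.filter (fun e => e.card = 3 ∧ (e.filter (fun v : Fin n => (v : ℕ) < s)).card = 1)

lemma exactly_one {α : Type*} [DecidableEq α] (P : α → Prop) [DecidablePred P] (a b c : α)
    (hab : a ≠ b) (hac : a ≠ c) (hbc : b ≠ c)
    (h : (({a,b,c} : Finset α).filter P).card = 1) :
    (P a ∧ ¬P b ∧ ¬P c) ∨ (¬P a ∧ P b ∧ ¬P c) ∨ (¬P a ∧ ¬P b ∧ P c) := by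
  by_cases Pa : P a <;> by_cases Pb : P b <;> by_cases Pc : P c <;>
    simp [filter_insert, filter_singleton, Pa, Pb, Pc, card_insert_of_notMem, hab, hac, hbc] at h ⊢

lemma cardA {n s : ℕ} (hsn : s ≤ n) :
    (univ.filter (fun v : Fin n => (v : ℕ) < s)).card = s := by
  have : (univ.filter (fun v : Fin n => (v : ℕ) < s))
      = (Finset.range s).attachFin (fun m hm => lt_of_lt_of_le (Finset.mem_range.mp hm) hsn) := by
    ext v; simp [Finset.mem_attachFin]
  rw [this, Finset.card_attachFin, Finset.card_range]

lemma cardB {n s : ℕ} (hsn : s ≤ n) :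
    (univ.filter (fun v : Fin n => ¬ (v : ℕ) < s)).card = n - s := by
  have h := Finset.card_filter_add_card_filter_not
      (s := (univ : Finset (Fin n))) (p := fun v : Fin n => (v : ℕ) < s)
  rw [cardA hsn, Finset.card_univ, Fintype.card_fin] at h
  omega

lemma filter_insert_pair {n s : ℕ} (a : Fin n) (p : Finset (Fin n))
    (ha : (a : ℕ) < s) (hp : ∀ v ∈ p, ¬ (v : ℕ) < s) :
    (insert a p).filter (fun v : Fin n => (v : ℕ) < s) = {a} ∧
    (insert a p).filter (fun v : Fin n => ¬ (v : ℕ) < s) = p := by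
  constructor
  · rw [Finset.filter_insert, if_pos ha, Finset.filter_eq_empty_iff.mpr hp, LawfulSingleton.insert_empty_eq]
  · rw [Finset.filter_insert, if_neg (by simpa using ha), Finset.filter_true_of_mem hp]

lemma Hns_eq {n s : ℕ} : Hns n s =
    ((univ.filter (fun v : Fin n => (v : ℕ) < s)) ×ˢ
      (univ.filter (fun v : Fin n => ¬ (v : ℕ) < s)).powersetCard 2).image
      (fun q => insert q.1 q.2) := by
  ext e
  simp only [Hns, mem_filter, mem_univ, true_and, mem_image, mem_product, mem_powersetCard,
    Prod.exists]
  constructor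
  · rintro ⟨h3, h1⟩
    obtain ⟨a, ha⟩ := Finset.card_eq_one.mp h1
    have haA : (a : ℕ) < s := by
      have : a ∈ e.filter (fun v : Fin n => (v : ℕ) < s) := ha ▸ Finset.mem_singleton_self a
      exact (Finset.mem_filter.mp this).2
    have hsplit := Finset.card_filter_add_card_filter_not
      (s := e) (p := fun v : Fin n => (v : ℕ) < s)
    refine ⟨a, e.filter (fun v : Fin n => ¬ (v : ℕ) < s), ⟨haA, ?_, ?_⟩, ?_⟩
    · intro v hv; exact Finset.mem_filter.mpr ⟨mem_univ v, (Finset.mem_filter.mp hv).2⟩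
    · omega
    · rw [Finset.insert_eq, ← ha]
      exact Finset.filter_union_filter_not_eq _ e
  · rintro ⟨a, p, ⟨haA, hpB, hp2⟩, rfl⟩
    have hpB' : ∀ v ∈ p, ¬ (v : ℕ) < s := fun v hv => (Finset.mem_filter.mp (hpB hv)).2
    have hap : a ∉ p := fun h => hpB' a h haA
    obtain ⟨hfa, -⟩ := filter_insert_pair a p haA hpB'
    refine ⟨by rw [Finset.card_insert_of_notMem hap, hp2], by rw [hfa]; simp⟩

lemma cardHns {n s : ℕ} (hsn : s ≤ n) : (Hns n s).card = s * (n - s).choose 2 := by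
  rw [Hns_eq, Finset.card_image_of_injOn, Finset.card_product, Finset.card_powersetCard,
    cardA hsn, cardB hsn]
  rintro ⟨a, p⟩ hq ⟨a', p'⟩ hq' heq
  simp only [mem_product, mem_filter, mem_powersetCard, mem_coe, mem_univ, true_and] at hq hq'
  obtain ⟨haA, hpB, -⟩ := hq
  obtain ⟨haA', hpB', -⟩ := hq'
  have h1 := filter_insert_pair a p haA (fun v hv => (Finset.mem_filter.mp (hpB hv)).2)
  have h2 := filter_insert_pair a' p' haA' (fun v hv => (Finset.mem_filter.mp (hpB' hv)).2)
  simp only at heq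
  have haa : a = a' := by
    have := h1.1.symm.trans (heq ▸ h2.1)
    exact Finset.singleton_injective this
  have hpp : p = p' := h1.2.symm.trans (heq ▸ h2.2)
  simp [haa, hpp]

lemma matchHns {n s : ℕ} (hsn : s ≤ n) : MatchingAtMost (Hns n s) s := by
  intro M hM hdisj
  have hcard1 : ∀ e ∈ M, (e.filter (fun v : Fin n => (v : ℕ) < s)).card = 1 := by
    intro e he
    exact (Finset.mem_filter.mp (hM he)).2.2
  have hinj : Set.InjOn (fun e : Finset (Fin n) => e.filter (fun v : Fin n => (v : ℕ) < s)) M := by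
    intro e he e' he' heq
    by_contra hne
    obtain ⟨v, hv⟩ := Finset.card_eq_one.mp (hcard1 e he)
    have hv1 : v ∈ e := Finset.filter_subset _ e (hv ▸ Finset.mem_singleton_self v)
    have hv2 : v ∈ e' := by
      have heq' : e'.filter (fun v : Fin n => (v : ℕ) < s) = {v} := by
        simpa using heq.symm.trans hv
      exact Finset.filter_subset _ e' (heq' ▸ Finset.mem_singleton_self v)
    exact Finset.disjoint_left.mp (hdisj he he' hne) hv1 hv2
  rw [← Finset.card_image_of_injOn hinj]
  have hsub : M.image (fun e => e.filter (fun v : Fin n => (v : ℕ) < s)) ⊆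
      (univ.filter (fun v : Fin n => (v : ℕ) < s)).image (fun v => ({v} : Finset (Fin n))) := by
    intro x hx
    obtain ⟨e, he, rfl⟩ := Finset.mem_image.mp hx
    obtain ⟨v, hv⟩ := Finset.card_eq_one.mp (hcard1 e he)
    have : v ∈ e.filter (fun v : Fin n => (v : ℕ) < s) := hv ▸ Finset.mem_singleton_self v
    exact Finset.mem_image.mpr ⟨v, by simp [(Finset.mem_filter.mp this).2], hv.symm⟩
  calc _ ≤ _ := Finset.card_le_card hsub
    _ ≤ _ := Finset.card_image_le
    _ = s := cardA hsn

lemma noCopy {n s t : ℕ} (ht : 3 ≤ t) (hst : s ≤ t - 2) (hsn : s ≤ n) :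
    ¬ HasCopy (FPtEdges t) (Hns n s) := by
  rintro ⟨f, hinj, hf⟩
  set P : Fin (t - 1) ⊕ Fin t → Prop := fun x => ((f x : ℕ) < s) with hP
  have key : ∀ (i : Fin (t - 1)) (j : Fin t), (i : ℕ) < (j : ℕ) →
      (P (.inl i) ∧ ¬P (.inr (Fin.castLE (Nat.sub_le t 1) i)) ∧ ¬P (.inr j)) ∨
      (¬P (.inl i) ∧ P (.inr (Fin.castLE (Nat.sub_le t 1) i)) ∧ ¬P (.inr j)) ∨
      (¬P (.inl i) ∧ ¬P (.inr (Fin.castLE (Nat.sub_le t 1) i)) ∧ P (.inr j)) := by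
    intro i j hij
    have hmem := hf _ ⟨i, j, hij, rfl⟩
    rw [Finset.image_insert, Finset.image_insert, Finset.image_singleton] at hmem
    have hcard := (Finset.mem_filter.mp hmem).2.2
    have d1 : (Sum.inl i : Fin (t-1) ⊕ Fin t) ≠ .inr (Fin.castLE (Nat.sub_le t 1) i) := by simp
    have d2 : (Sum.inl i : Fin (t-1) ⊕ Fin t) ≠ .inr j := by simp
    have d3 : (Sum.inr (Fin.castLE (Nat.sub_le t 1) i) : Fin (t-1) ⊕ Fin t) ≠ .inr j := by
      simp only [ne_eq, Sum.inr.injEq]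
      intro h
      rw [Fin.ext_iff, Fin.coe_castLE] at h
      omega
    exact exactly_one (fun v : Fin n => (v : ℕ) < s) _ _ _
      (hinj.ne d1) (hinj.ne d2) (hinj.ne d3) hcard
  have h2t : 2 ≤ t - 1 := by omega
  set last : Fin t := ⟨t - 1, by omega⟩ with hlastdef
  by_cases hlast : P (.inr last)
  · have h0 := key ⟨0, by omega⟩ last (by show (0:ℕ) < t - 1; omega)
    have h1 := key ⟨1, by omega⟩ last (by show (1:ℕ) < t - 1; omega)
    have h01 := key ⟨0, by omega⟩ ⟨1, by omega⟩ (by simp)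
    have e0 : (Fin.castLE (Nat.sub_le t 1) (⟨0, by omega⟩ : Fin (t-1))) = (⟨0, by omega⟩ : Fin t) := rfl
    have e1 : (Fin.castLE (Nat.sub_le t 1) (⟨1, by omega⟩ : Fin (t-1))) = (⟨1, by omega⟩ : Fin t) := rfl
    rw [e0] at h0 h01
    rw [e1] at h1
    tauto
  · have hone : ∀ i : Fin (t - 1),
        (P (.inl i) ∧ ¬P (.inr (Fin.castLE (Nat.sub_le t 1) i))) ∨
        (¬P (.inl i) ∧ P (.inr (Fin.castLE (Nat.sub_le t 1) i))) := by
      intro i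
      have := key i last (by simpa [hlastdef] using i.isLt)
      tauto
    set g : Fin (t - 1) → Fin n :=
      fun i => if P (.inl i) then f (.inl i) else f (.inr (Fin.castLE (Nat.sub_le t 1) i)) with hg
    have hgA : ∀ i, ((g i : ℕ) < s) := by
      intro i
      rcases hone i with ⟨h1, h2⟩ | ⟨h1, h2⟩
      · show ((if P (.inl i) then f (.inl i) else f (.inr (Fin.castLE (Nat.sub_le t 1) i)) : Fin n) : ℕ) < s
        rw [if_pos h1]; exact h1
      · show ((if P (.inl i) then f (.inl i) else f (.inr (Fin.castLE (Nat.sub_le t 1) i)) : Fin n) : ℕ) < s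
        rw [if_neg h1]; exact h2
    have hginj : Function.Injective g := by
      intro i i' h
      simp only [hg] at h
      split_ifs at h with h1 h2 h2
      · simpa using hinj h
      · exact absurd (hinj h) (by simp)
      · exact absurd (hinj h) (by simp)
      · have := hinj h
        simp only [Sum.inr.injEq] at this
        exact Fin.ext (by simpa [Fin.ext_iff] using this)
    have hle : t - 1 ≤ s := by
      have := Finset.card_le_card_of_injOn (s := (univ : Finset (Fin (t - 1))))
        (t := univ.filter (fun v : Fin n => (v : ℕ) < s)) g
        (fun a _ => Finset.mem_filter.mpr ⟨mem_univ _, hgA a⟩)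
        (fun a _ b _ h => hginj h)
      simpa [cardA hsn] using this
    omega

theorem stmt_6 {n s t : ℕ} (ht : 3 ≤ t) (hst : s ≤ t - 2) (hsn : s ≤ n) :
    ¬ HasCopy (FPtEdges t) (Hns n s) ∧ MatchingAtMost (Hns n s) s ∧
    (Hns n s).card = s * (n - s).choose 2 := by
  exact ⟨noCopy ht hst hsn, matchHns hsn, cardHns hsn⟩
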